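/- Let F : ℝ → ℝ be continuous and strictly increasing with F(x+1) = F(x)+1 for all x, and suppose that for some a₀ ∈ ℝ the restriction of F to the interval [a₀, a₀+1] is strictly concave. If the rotation number ρ(F) equals p/q with p ∈ ℤ, q a positive integer and gcd(p,q) = 1, then the set P := {x ∈ [a₀, a₀+1) : F^q(x) = x + p} is nonempty, finite, and has at most 2q elements. -/

import Mathlib

open Real Filter Set

/-- Rotation number of a lift `T` of a circle homeomorphism,
defined as the limit of `T^[n] 0 / n` (which exists and is independent
of the base point for lifts of orientation-preserving circle homeos). -/
noncomputable def rotationNumber (T : ℝ → ℝ) : ℝ :=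
  limUnder atTop (fun n : ℕ => T^[n] 0 / (n : ℝ))

/-- The expansion factor `Λ = sin(θ+α)/sin(θ−α)`. -/
noncomputable def Lam (α θ : ℝ) : ℝ := Real.sin (θ + α) / Real.sin (θ - α)

/-- The break point of increase `a₀ = (tan θ − 2ℓ)/(2 tan θ)`. -/
noncomputable def brk0 (ℓ θ : ℝ) : ℝ := (Real.tan θ - 2 * ℓ) / (2 * Real.tan θ)

/-- The break point of decrease `a₁ = −(2ℓ + tan α)/(2 tan θ)`. -/
noncomputable def brk1 (ℓ α θ : ℝ) : ℝ := -(2 * ℓ + Real.tan α) / (2 * Real.tan θ)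

/-- The two-piece definition of the lift on the fundamental interval `[a₁, a₁+1)`. -/
noncomputable def Ftrap0 (ℓ α θ x : ℝ) : ℝ :=
  if x ≤ brk0 ℓ θ then -brk1 ℓ α θ + (Lam α θ)⁻¹ * (x - brk1 ℓ α θ)
  else 1 - brk0 ℓ θ + Lam α θ * (x - brk0 ℓ θ)

/-- The lift `F_{ℓ,α,θ} : ℝ → ℝ` of the Poincaré map of the internal-wave
billiard in a rectangular trapezoid: it is given by the two-piece formula on
`[a₁, a₁+1)` and extended by `F(x+k) = F(x)+k` for `k ∈ ℤ`. -/
noncomputable def Ftrap (ℓ α θ x : ℝ) : ℝ :=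
  Ftrap0 ℓ α θ (x - ⌊x - brk1 ℓ α θ⌋) + ⌊x - brk1 ℓ α θ⌋


section Stmt1Aux

variable {F : ℝ → ℝ} {a : ℝ}

lemma lift_int (hlift : ∀ x : ℝ, F (x + 1) = F x + 1) (k : ℤ) (x : ℝ) :
    F (x + k) = F x + k := by
  induction k using Int.induction_on with
  | zero => simp
  | succ n ih =>
      push_cast at ih ⊢
      rw [show x + ((n : ℝ) + 1) = (x + n) + 1 by ring, hlift, ih]; ring
  | pred n ih =>
      push_cast at ih ⊢
      have h := hlift (x + (-(n : ℝ) - 1))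
      rw [show x + (-(n:ℝ) - 1) + 1 = x + (-(n:ℝ)) by ring] at h
      rw [ih] at h
      linarith [h]

lemma iter_lift (hlift : ∀ x : ℝ, F (x + 1) = F x + 1) (n : ℕ) (k : ℤ) (x : ℝ) :
    F^[n] (x + k) = F^[n] x + k := by
  induction n generalizing x with
  | zero => simp
  | succ n ih =>
      rw [Function.iterate_succ_apply', Function.iterate_succ_apply', ih, lift_int hlift]

lemma conc_int (hlift : ∀ x : ℝ, F (x + 1) = F x + 1)
    (hconc : StrictConcaveOn ℝ (Set.Icc a (a + 1)) F) (k : ℤ) :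
    StrictConcaveOn ℝ (Set.Icc (a + k) (a + k + 1)) F := by
  refine ⟨convex_Icc _ _, ?_⟩
  intro x hx y hy hxy s t hs ht hst
  have hx' : x - k ∈ Set.Icc a (a + 1) := ⟨by linarith [hx.1], by linarith [hx.2]⟩
  have hy' : y - k ∈ Set.Icc a (a + 1) := ⟨by linarith [hy.1], by linarith [hy.2]⟩
  have hne : x - (k : ℝ) ≠ y - (k : ℝ) := fun h => hxy (by linarith [sub_left_injective.eq_iff.mp h])
  have key := hconc.2 hx' hy' hne hs ht hst
  have e1 : s • (x - (k:ℝ)) + t • (y - (k:ℝ)) = (s • x + t • y) + (-k : ℤ) := by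
    push_cast; simp only [smul_eq_mul]; linear_combination (-(k:ℝ)) * hst
  rw [e1, lift_int hlift] at key
  have e2 : F (x + (-k : ℤ)) = F x + (-k : ℤ) := lift_int hlift _ _
  have e3 : F (y + (-k : ℤ)) = F y + (-k : ℤ) := lift_int hlift _ _
  push_cast at e2 e3 key
  rw [show x - (k:ℝ) = x + -(k:ℝ) by ring, e2, show y - (k:ℝ) = y + -(k:ℝ) by ring, e3] at key
  simp only [smul_eq_mul] at key ⊢
  have e4 : s * (F x + -(k:ℝ)) + t * (F y + -(k:ℝ)) = s * F x + t * F y + -(k:ℝ) := by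
    linear_combination (-(k:ℝ)) * hst
  linarith [key, e4]

lemma comp_sconcave {I J : Set ℝ} {f g : ℝ → ℝ} (hJ : Convex ℝ J)
    (hf : StrictConcaveOn ℝ I f) (hfm : StrictMono f) (hfi : ∀ x ∈ I, f x ∈ J)
    (hg : StrictConcaveOn ℝ J g) (hgm : Monotone g) :
    StrictConcaveOn ℝ I (g ∘ f) := by
  refine ⟨hf.1, ?_⟩
  intro x hx y hy hxy s t hs ht hst
  have h1 : s • f x + t • f y < f (s • x + t • y) := hf.2 hx hy hxy hs ht hst
  have h3 : s • g (f x) + t • g (f y) < g (s • f x + t • f y) :=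
    hg.2 (hfi x hx) (hfi y hy) (fun h => hxy (hfm.injective h)) hs ht hst
  exact h3.trans_le (hgm h1.le)

lemma iter_sconcave (hmono : StrictMono F) (hlift : ∀ x : ℝ, F (x + 1) = F x + 1)
    (hconc : StrictConcaveOn ℝ (Set.Icc a (a + 1)) F) (n : ℕ) (hn : 0 < n)
    {I : Set ℝ} (hI : Convex ℝ I)
    (h : ∀ j < n, ∃ k : ℤ, ∀ x ∈ I, F^[j] x ∈ Set.Icc (a + k) (a + k + 1)) :
    StrictConcaveOn ℝ I (F^[n]) := by
  induction n with
  | zero => omega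
  | succ n ih =>
      rcases Nat.eq_zero_or_pos n with rfl | hn'
      · obtain ⟨k, hk⟩ := h 0 (by omega)
        simp only [Function.iterate_zero, id_eq] at hk
        rw [show (1:ℕ) = 0 + 1 from rfl, Function.iterate_succ, Function.iterate_zero]
        simpa using ((conc_int hlift hconc k).subset (fun x hx => hk x hx) hI)
      · have ihc := ih hn' (fun j hj => h j (by omega))
        obtain ⟨k, hk⟩ := h n (by omega)
        rw [Function.iterate_succ']
        exact comp_sconcave (convex_Icc _ _) ihc (hmono.iterate n) hk
          (conc_int hlift hconc k) hmono.monotone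

lemma no_three {s : Set ℝ}
    (h : ∀ x ∈ s, ∀ z ∈ s, ∀ y ∈ s, x < y → y < z → False) :
    ∀ x ∈ s, ∀ y ∈ s, ∀ z ∈ s, x = y ∨ x = z ∨ y = z := by
  intro x hx y hy z hz
  by_contra hc
  push_neg at hc
  obtain ⟨h1, h2, h3⟩ := hc
  rcases lt_trichotomy x y with hxy | hxy | hxy
  · rcases lt_trichotomy y z with hyz | hyz | hyz
    · exact h x hx z hz y hy hxy hyz
    · exact h3 hyz
    · rcases lt_trichotomy x z with hxz | hxz | hxz
      · exact h x hx y hy z hz hxz hyz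
      · exact h2 hxz
      · exact h z hz y hy x hx hxz hxy
  · exact h1 hxy
  · rcases lt_trichotomy x z with hxz | hxz | hxz
    · exact h y hy z hz x hx hxy hxz
    · exact h2 hxz
    · rcases lt_trichotomy y z with hyz | hyz | hyz
      · exact h y hy x hx z hz hyz hxz
      · exact h3 hyz
      · exact h z hz x hx y hy hyz hxy

lemma finite_card_le_two {s : Set ℝ}
    (h : ∀ x ∈ s, ∀ y ∈ s, ∀ z ∈ s, x = y ∨ x = z ∨ y = z) :
    s.Finite ∧ s.ncard ≤ 2 := by
  rcases s.eq_empty_or_nonempty with rfl | ⟨u, hu⟩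
  · simp
  rcases (s \ {u}).eq_empty_or_nonempty with he | ⟨v, hv⟩
  · have h1 : s ⊆ {u} := Set.diff_eq_empty.mp he
    exact ⟨(Set.finite_singleton u).subset h1,
      le_trans (Set.ncard_le_ncard h1 (Set.finite_singleton u)) (by simp)⟩
  · have huv : u ≠ v := fun h' => hv.2 (by simp [h'.symm])
    have h1 : s ⊆ {u, v} := by
      intro x hx
      rcases h x hx u hu v hv.1 with h' | h' | h'
      · simp [h']
      · simp [h']
      · exact absurd h' huv
    have hfin : ({u, v} : Set ℝ).Finite := (Set.finite_singleton v).insert u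
    refine ⟨hfin.subset h1, le_trans (Set.ncard_le_ncard h1 hfin) ?_⟩
    calc ({u, v} : Set ℝ).ncard ≤ ({v} : Set ℝ).ncard + 1 := Set.ncard_insert_le _ _
      _ ≤ 2 := by simp

lemma ncard_biUnion_le2 {ι : Type*} [DecidableEq ι] (t : Finset ι) (f : ι → Set ℝ)
    (hf : ∀ i, (f i).Finite) (hm : ∀ i, (f i).ncard ≤ 2) :
    (⋃ i ∈ t, f i).Finite ∧ (⋃ i ∈ t, f i).ncard ≤ t.card * 2 := by
  classical
  induction t using Finset.induction_on with
  | empty => simp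
  | @insert i t hi ih =>
      rw [Finset.set_biUnion_insert]
      refine ⟨(hf i).union ih.1, ?_⟩
      calc (f i ∪ ⋃ x ∈ t, f x).ncard ≤ (f i).ncard + (⋃ x ∈ t, f x).ncard :=
            Set.ncard_union_le _ _
        _ ≤ 2 + t.card * 2 := add_le_add (hm i) ih.2
        _ = (insert i t).card * 2 := by rw [Finset.card_insert_of_notMem hi]; ring

end Stmt1Aux

open Topology in
/-- for a lift F of a circle homeomorphism which is strictly
concave on a fundamental interval, with rational rotation number p/q in lowest
terms, the set of q-periodic points in a fundamental domain is nonempty,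
finite, with at most 2q elements. -/
theorem stmt1 (F : ℝ → ℝ) (hF : Continuous F) (hmono : StrictMono F)
    (hlift : ∀ x : ℝ, F (x + 1) = F x + 1) (a : ℝ)
    (hconc : StrictConcaveOn ℝ (Set.Icc a (a + 1)) F)
    (p : ℤ) (q : ℕ) (hq : 0 < q) (hpq : Int.gcd p (q : ℤ) = 1)
    (hrot : rotationNumber F = (p : ℝ) / (q : ℝ)) :
    {x ∈ Set.Ico a (a + 1) | F^[q] x = x + (p : ℝ)}.Nonempty ∧
    {x ∈ Set.Ico a (a + 1) | F^[q] x = x + (p : ℝ)}.Finite ∧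
    {x ∈ Set.Ico a (a + 1) | F^[q] x = x + (p : ℝ)}.ncard ≤ 2 * q := by
  classical
  set S := {x ∈ Set.Ico a (a + 1) | F^[q] x = x + (p : ℝ)} with hSdef
  -- translation-number machinery
  set f : CircleDeg1Lift := ⟨⟨F, hmono.monotone⟩, hlift⟩ with hfdef
  have hcoe : ⇑f = F := rfl
  have htend : Tendsto (fun n : ℕ => F^[n] 0 / (n : ℝ)) atTop (𝓝 f.translationNumber) := by
    have h := f.tendsto_translation_number₀
    simpa [CircleDeg1Lift.coe_pow, hcoe] using h
  have htau : f.translationNumber = (p : ℝ) / (q : ℝ) := by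
    rw [← hrot]; exact htend.limUnder_eq.symm
  obtain ⟨x₀, hx₀⟩ := (f.translationNumber_eq_rat_iff (by rw [hcoe]; exact hF) hq).mp htau
  have hx₀' : F^[q] x₀ = x₀ + (p : ℝ) := by
    rw [← hcoe, ← CircleDeg1Lift.coe_pow]; exact hx₀
  -- nonemptiness
  have hy1 : a ≤ x₀ - ⌊x₀ - a⌋ := by have := Int.floor_le (x₀ - a); linarith
  have hy2 : x₀ - ⌊x₀ - a⌋ < a + 1 := by have := Int.lt_floor_add_one (x₀ - a); linarith
  have hyq : F^[q] (x₀ - ⌊x₀ - a⌋) = (x₀ - ⌊x₀ - a⌋) + (p : ℝ) := by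
    have h := iter_lift hlift q (-⌊x₀ - a⌋) x₀
    push_cast at h
    rw [show x₀ - (⌊x₀ - a⌋ : ℝ) = x₀ + -(⌊x₀ - a⌋ : ℝ) by ring, h, hx₀']
    ring
  have hne : S.Nonempty := ⟨x₀ - ⌊x₀ - a⌋, ⟨⟨hy1, hy2⟩, hyq⟩⟩
  -- counting
  have hmonI : ∀ j : ℕ, StrictMono (F^[j]) := fun j => hmono.iterate j
  set T : ℝ → ℤ := fun x => ∑ j ∈ Finset.Ico 1 q, ⌊F^[j] x - a⌋ with hT
  set M : ℤ := ∑ j ∈ Finset.Ico 1 q, ⌊F^[j] a - a⌋ with hM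
  have hfl : ∀ x, a ≤ x → x < a + 1 → ∀ j : ℕ,
      ⌊F^[j] a - a⌋ ≤ ⌊F^[j] x - a⌋ ∧ ⌊F^[j] x - a⌋ ≤ ⌊F^[j] a - a⌋ + 1 := by
    intro x hax hxa j
    have h1 : F^[j] a ≤ F^[j] x := (hmonI j).monotone hax
    have h2 : F^[j] x < F^[j] a + 1 := by
      have h3 := iter_lift hlift j 1 a
      push_cast at h3
      calc F^[j] x < F^[j] (a + 1) := (hmonI j) hxa
        _ = F^[j] a + 1 := h3
    refine ⟨Int.floor_le_floor (by linarith), ?_⟩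
    have h4 : ⌊F^[j] x - a⌋ < ⌊F^[j] a - a⌋ + 2 := by
      apply Int.floor_lt.mpr
      push_cast
      linarith [Int.lt_floor_add_one (F^[j] a - a)]
    omega
  have hkey : ∀ x ∈ S, ∀ z ∈ S, ∀ y ∈ S, T x = T z → x < y → y < z → False := by
    intro x hx z hz y hy hTxz hxy hyz
    obtain ⟨⟨hax, hxa⟩, hfx⟩ := hx
    obtain ⟨⟨haz, hza⟩, hfz⟩ := hz
    obtain ⟨_, hfy⟩ := hy
    have hxz : x < z := hxy.trans hyz
    have hle : ∀ j ∈ Finset.Ico 1 q, ⌊F^[j] x - a⌋ ≤ ⌊F^[j] z - a⌋ := by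
      intro j _
      exact Int.floor_le_floor (by linarith [(hmonI j).monotone hxz.le])
    have hiteq : ∀ j ∈ Finset.Ico 1 q, ⌊F^[j] x - a⌋ = ⌊F^[j] z - a⌋ :=
      (Finset.sum_eq_sum_iff_of_le hle).mp (by simpa [hT] using hTxz)
    have hconcq : StrictConcaveOn ℝ (Set.Icc x z) (F^[q]) := by
      apply iter_sconcave hmono hlift hconc q hq (convex_Icc _ _)
      intro j hj
      rcases Nat.eq_zero_or_pos j with rfl | hj1
      · refine ⟨0, fun w hw => ?_⟩
        simp only [Function.iterate_zero, id_eq]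
        constructor
        · push_cast; linarith [hw.1]
        · push_cast; linarith [hw.2]
      · refine ⟨⌊F^[j] x - a⌋, fun w hw => ?_⟩
        have hjm : j ∈ Finset.Ico 1 q := Finset.mem_Ico.mpr ⟨hj1, hj⟩
        have h1 : F^[j] x ≤ F^[j] w := (hmonI j).monotone hw.1
        have h2 : F^[j] w ≤ F^[j] z := (hmonI j).monotone hw.2
        constructor
        · have := Int.floor_le (F^[j] x - a); linarith
        · have h3 := Int.lt_floor_add_one (F^[j] z - a)
          rw [← hiteq j hjm] at h3
          push_cast at h3 ⊢
          linarith
    have hzx : 0 < z - x := by linarith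
    set s : ℝ := (z - y) / (z - x) with hsdef
    set t : ℝ := (y - x) / (z - x) with htdef
    have hs : 0 < s := div_pos (by linarith) hzx
    have ht : 0 < t := div_pos (by linarith) hzx
    have hst : s + t = 1 := by rw [hsdef, htdef]; field_simp; ring
    have hsy : s * x + t * z = y := by rw [hsdef, htdef]; field_simp; ring
    have hlt := hconcq.2 (Set.left_mem_Icc.mpr hxz.le) (Set.right_mem_Icc.mpr hxz.le)
      hxz.ne hs ht hst
    simp only [smul_eq_mul] at hlt
    rw [hsy, hfy, hfx, hfz] at hlt
    have e : s * (x + (p : ℝ)) + t * (z + (p : ℝ)) = y + (p : ℝ) := by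
      linear_combination hsy + (p : ℝ) * hst
    linarith
  have hTb : ∀ x ∈ S, T x ∈ Finset.Icc M (M + (q - 1 : ℕ)) := by
    intro x hx
    obtain ⟨⟨hax, hxa⟩, _⟩ := hx
    rw [Finset.mem_Icc]
    constructor
    · exact Finset.sum_le_sum (fun j _ => (hfl x hax hxa j).1)
    · calc T x ≤ ∑ j ∈ Finset.Ico 1 q, (⌊F^[j] a - a⌋ + 1) :=
            Finset.sum_le_sum (fun j _ => (hfl x hax hxa j).2)
        _ = M + (Finset.Ico 1 q).card := by
            rw [Finset.sum_add_distrib]; simp [hM]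
        _ = M + (q - 1 : ℕ) := by rw [Nat.card_Ico]
  have hcover : S ⊆ ⋃ k ∈ Finset.Icc M (M + (q - 1 : ℕ)), {x ∈ S | T x = k} :=
    fun x hx => Set.mem_biUnion (hTb x hx) ⟨hx, rfl⟩
  have hfib : ∀ k : ℤ, ({x ∈ S | T x = k}).Finite ∧ ({x ∈ S | T x = k}).ncard ≤ 2 := by
    intro k
    apply finite_card_le_two
    apply no_three
    intro x hx z hz y hy hxy hyz
    exact hkey x hx.1 z hz.1 y hy.1 (hx.2.trans hz.2.symm) hxy hyz
  obtain ⟨hUfin, hUcard⟩ := ncard_biUnion_le2 (Finset.Icc M (M + (q - 1 : ℕ)))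
    (fun k => {x ∈ S | T x = k}) (fun k => (hfib k).1) (fun k => (hfib k).2)
  have hSfin : S.Finite := hUfin.subset hcover
  have hScard : S.ncard ≤ 2 * q := by
    have h1 := Set.ncard_le_ncard hcover hUfin
    have h2 : (Finset.Icc M (M + (q - 1 : ℕ))).card = q := by
      rw [Int.card_Icc]
      omega
    rw [h2] at hUcard
    omega
  exact ⟨hne, hSfin, hScard⟩
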